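/- arXiv:2511.02625 — 2 statements merged into one kernel-verified Lean document; each statement's English description precedes it below -/
import Mathlib

section
/- The function ξ(t) = C·(Γ((t-k)/2)/Γ((t+d+k+1)/2))² (for fixed positive constant C and integers d, k) satisfies, for every β ∈ ℕ, the two-sided asymptotic estimate (-1)^β ξ^{(β)}(t) ≍ t^{-(d+2k+1)-β} as t → ∞; in particular ξ(t) ≍ t^{-(d+2k+1)} and ξ is eventually completely monotone in the sense that its derivatives alternate in sign. -/
open MeasureTheory Set Filter

namespace XiAux

noncomputable section

def q (σ : ℝ) : ℝ := max (σ - 1) 0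

def f (σ : ℝ) (u : ℝ) : ℝ := (1 - Real.exp (-u)) ^ (σ - 1)

def μ2 : Measure (ℝ × ℝ) := (volume.restrict (Ioi 0)).prod (volume.restrict (Ioi 0))

lemma μ2_def : μ2 = (volume.restrict (Ioi 0)).prod (volume.restrict (Ioi 0)) := rfl

def Fi (σ : ℝ) (β : ℕ) (x : ℝ) (p : ℝ × ℝ) : ℝ :=
  (p.1 + p.2) ^ β * Real.exp (-(x * (p.1 + p.2))) * (f σ p.1 * f σ p.2)

def G (σ : ℝ) (β : ℕ) (x : ℝ) : ℝ := ∫ p, Fi σ β x p ∂μ2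

def A (σ : ℝ) (x : ℝ) (n : ℕ) (u : ℝ) : ℝ :=
  u ^ n * Real.exp (-(x * u)) * (3 * (u ^ (σ - 1) + u ^ q σ))

def Pm (σ : ℝ) (x : ℝ) (β : ℕ) (p : ℝ × ℝ) : ℝ :=
  ∑ i ∈ Finset.range (β + 1), (β.choose i : ℝ) * (A σ x i p.1 * A σ x (β - i) p.2)

def κ (σ : ℝ) (n : ℕ) : ℝ :=
  3 * (Real.Gamma ((n : ℝ) + σ) + 2 ^ (q σ + 1 - σ) * Real.Gamma ((n : ℝ) + q σ + 1))

variable {σ : ℝ}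

lemma sigma_half (hσ : σ = 1/2 ∨ 1 ≤ σ) : (1/2 : ℝ) ≤ σ := by
  rcases hσ with h | h
  · rw [h]
  · linarith

lemma q_nonneg : 0 ≤ q σ := le_max_right _ _

lemma q_ge : σ - 1 ≤ q σ := le_max_left _ _

lemma one_sub_exp_neg_nonneg {u : ℝ} (hu : 0 ≤ u) : 0 ≤ 1 - Real.exp (-u) := by
  have h : Real.exp (-u) ≤ Real.exp 0 := Real.exp_le_exp.mpr (by linarith)
  rw [Real.exp_zero] at h; linarith

lemma one_sub_exp_neg_pos {u : ℝ} (hu : 0 < u) : 0 < 1 - Real.exp (-u) := by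
  have h : Real.exp (-u) < Real.exp 0 := Real.exp_lt_exp.mpr (by linarith)
  rw [Real.exp_zero] at h; linarith

lemma ue_le {u : ℝ} (hu : 0 ≤ u) : u * Real.exp (-u) ≤ 1 - Real.exp (-u) := by
  have h := Real.add_one_le_exp u
  have hp := (Real.exp_pos (-u)).le
  have h2 : (u + 1) * Real.exp (-u) ≤ Real.exp u * Real.exp (-u) :=
    mul_le_mul_of_nonneg_right h hp
  rw [← Real.exp_add, add_neg_cancel, Real.exp_zero] at h2
  nlinarith

lemma one_sub_exp_le {u : ℝ} : 1 - Real.exp (-u) ≤ u := by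
  have h := Real.add_one_le_exp (-u); linarith

lemma f_nonneg {u : ℝ} (hu : 0 ≤ u) : 0 ≤ f σ u :=
  Real.rpow_nonneg (one_sub_exp_neg_nonneg hu) _

lemma f_le (hσ : σ = 1/2 ∨ 1 ≤ σ) {u : ℝ} (hu : 0 < u) :
    f σ u ≤ 3 * (u ^ (σ - 1) + u ^ q σ) := by
  rcases hσ with h | h
  · -- σ = 1/2
    subst h
    have hq : q (1/2 : ℝ) = 0 := by unfold q; rw [max_eq_right]; norm_num
    rw [hq, Real.rpow_zero]
    have hb := one_sub_exp_neg_pos hu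
    rcases le_or_gt u 1 with h1 | h1
    · -- u ≤ 1 : 1 - e^{-u} ≥ u e^{-1}
      have h2 : u * Real.exp (-1) ≤ 1 - Real.exp (-u) := by
        have h3 : Real.exp (-1) ≤ Real.exp (-u) := Real.exp_le_exp.mpr (by linarith)
        have h4 := ue_le hu.le
        nlinarith [Real.exp_pos (-1)]
      have h5 : 0 < u * Real.exp (-1) := by positivity
      have h6 : f (1/2) u ≤ (u * Real.exp (-1)) ^ ((1:ℝ)/2 - 1) :=
        Real.rpow_le_rpow_of_nonpos h5 h2 (by norm_num)
      have h7 : (u * Real.exp (-1)) ^ ((1:ℝ)/2 - 1)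
          = u ^ ((1:ℝ)/2 - 1) * (Real.exp (-1)) ^ ((1:ℝ)/2 - 1) :=
        Real.mul_rpow hu.le (Real.exp_pos _).le
      have h8 : (Real.exp (-1)) ^ ((1:ℝ)/2 - 1) = Real.exp (1/2) := by
        rw [Real.rpow_def_of_pos (Real.exp_pos _), Real.log_exp]; norm_num
      have h9 : Real.exp (1/2 : ℝ) ≤ 3 := by
        have := Real.exp_one_lt_d9
        have h10 : Real.exp (1/2 : ℝ) ≤ Real.exp 1 := Real.exp_le_exp.mpr (by norm_num)
        linarith
      have h11 : 0 ≤ u ^ ((1:ℝ)/2 - 1) := Real.rpow_nonneg hu.le _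
      calc f (1/2) u ≤ u ^ ((1:ℝ)/2 - 1) * (Real.exp (-1)) ^ ((1:ℝ)/2 - 1) := by
            rw [← h7]; exact h6
        _ ≤ u ^ ((1:ℝ)/2 - 1) * 3 := by rw [h8]; exact mul_le_mul_of_nonneg_left h9 h11
        _ ≤ 3 * (u ^ ((1:ℝ)/2 - 1) + 1) := by nlinarith
    · -- u ≥ 1
      have h2 : (1/2 : ℝ) ≤ 1 - Real.exp (-u) := by
        have h3 : Real.exp (-u) ≤ Real.exp (-1) := Real.exp_le_exp.mpr (by linarith)
        have h4 : Real.exp (-1 : ℝ) ≤ 1/2 := by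
          rw [Real.exp_neg]
          rw [inv_le_comm₀ (Real.exp_pos 1) (by norm_num)]
          have := Real.exp_one_gt_d9; linarith
        linarith
      have h6 : f (1/2) u ≤ ((1:ℝ)/2) ^ ((1:ℝ)/2 - 1) :=
        Real.rpow_le_rpow_of_nonpos (by norm_num) h2 (by norm_num)
      have h7 : ((1:ℝ)/2) ^ ((1:ℝ)/2 - 1) = (2:ℝ) ^ ((1:ℝ)/2) := by
        rw [one_div, ← Real.rpow_neg_one (2:ℝ), ← Real.rpow_mul (by norm_num)]
        norm_num
      have h8 : (2:ℝ) ^ ((1:ℝ)/2) ≤ (2:ℝ) ^ (1:ℝ) :=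
        Real.rpow_le_rpow_of_exponent_le (by norm_num) (by norm_num)
      rw [Real.rpow_one] at h8
      have h11 : 0 ≤ u ^ ((1:ℝ)/2 - 1) := Real.rpow_nonneg hu.le _
      nlinarith
  · -- 1 ≤ σ
    have hq : q σ = σ - 1 := by unfold q; rw [max_eq_left]; linarith
    have h1 : f σ u ≤ u ^ (σ - 1) :=
      Real.rpow_le_rpow (one_sub_exp_neg_nonneg hu.le) one_sub_exp_le (by linarith)
    have h2 : 0 ≤ u ^ (σ - 1) := Real.rpow_nonneg hu.le _
    rw [hq]; nlinarith

lemma f_ge (hσ : σ = 1/2 ∨ 1 ≤ σ) {u : ℝ} (hu : 0 < u) (hu4 : u ≤ 4) :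
    min (Real.exp (-(4 * (σ - 1)))) 1 * u ^ (σ - 1) ≤ f σ u := by
  rcases hσ with h | h
  · subst h
    have h1 : f (1/2) u ≥ u ^ ((1:ℝ)/2 - 1) := by
      apply Real.rpow_le_rpow_of_nonpos (one_sub_exp_neg_pos hu) one_sub_exp_le (by norm_num)
    have h2 : min (Real.exp (-(4 * ((1:ℝ)/2 - 1)))) 1 ≤ 1 := min_le_right _ _
    have h3 : 0 ≤ u ^ ((1:ℝ)/2 - 1) := Real.rpow_nonneg hu.le _
    nlinarith
  · have hbase : u * Real.exp (-4) ≤ 1 - Real.exp (-u) := by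
      have h3 : Real.exp (-4 : ℝ) ≤ Real.exp (-u) := Real.exp_le_exp.mpr (by linarith)
      have h4 := ue_le hu.le
      nlinarith
    have h5 : f σ u ≥ (u * Real.exp (-4)) ^ (σ - 1) :=
      Real.rpow_le_rpow (by positivity) hbase (by linarith)
    have h6 : (u * Real.exp (-4)) ^ (σ - 1)
        = u ^ (σ - 1) * Real.exp (-(4 * (σ - 1))) := by
      rw [Real.mul_rpow hu.le (Real.exp_pos _).le,
        Real.rpow_def_of_pos (Real.exp_pos _), Real.log_exp]
      ring_nf
    have h7 : min (Real.exp (-(4 * (σ - 1)))) 1 ≤ Real.exp (-(4 * (σ - 1))) := min_le_left _ _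
    have h8 : 0 ≤ u ^ (σ - 1) := Real.rpow_nonneg hu.le _
    calc min (Real.exp (-(4 * (σ - 1)))) 1 * u ^ (σ - 1)
        ≤ Real.exp (-(4 * (σ - 1))) * u ^ (σ - 1) := mul_le_mul_of_nonneg_right h7 h8
      _ = (u * Real.exp (-4)) ^ (σ - 1) := by rw [h6]; ring
      _ ≤ f σ u := h5


def Klow (σ : ℝ) : ℝ :=
  Real.exp (-(4:ℝ)) * (min (Real.exp (-(4 * (σ - 1)))) 1 * min 1 ((2:ℝ) ^ (σ - 1))) ^ 2

variable {σ : ℝ}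

lemma intOn {r x : ℝ} (hr : -1 < r) (hx : 0 < x) :
    IntegrableOn (fun u : ℝ => u ^ r * Real.exp (-(x * u))) (Ioi 0) := by
  have h := integrableOn_rpow_mul_exp_neg_mul_rpow (p := 1) hr zero_lt_one hx
  refine h.congr_fun (fun u hu => ?_) measurableSet_Ioi
  beta_reduce
  rw [Real.rpow_one, neg_mul]

lemma oneInt_val {r x : ℝ} (hr : -1 < r) (hx : 0 < x) :
    ∫ u in Ioi 0, u ^ r * Real.exp (-(x * u)) = (1/x) ^ (r+1) * Real.Gamma (r+1) := by
  have h := Real.integral_rpow_mul_exp_neg_mul_Ioi (a := r + 1) (r := x) (by linarith) hx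
  simpa using h

lemma A_eqOn {x : ℝ} (n : ℕ) :
    EqOn (fun u : ℝ => u ^ ((n : ℝ) + (σ - 1)) * Real.exp (-(x*u)) * 3
        + u ^ ((n : ℝ) + q σ) * Real.exp (-(x*u)) * 3) (A σ x n) (Ioi 0) := by
  intro u hu
  have hu0 : (0:ℝ) < u := hu
  simp only [A]
  rw [Real.rpow_add hu0, Real.rpow_add hu0, Real.rpow_natCast]
  ring

lemma half_le_sigma_exp (hσ : (1/2:ℝ) ≤ σ) (n : ℕ) : (-1 : ℝ) < (n:ℝ) + (σ - 1) := by
  have : (0:ℝ) ≤ (n:ℝ) := Nat.cast_nonneg n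
  linarith

lemma q_exp (n : ℕ) : (-1:ℝ) < (n:ℝ) + q σ := by
  have h1 : (0:ℝ) ≤ (n:ℝ) := Nat.cast_nonneg n
  have := q_nonneg (σ := σ); linarith

lemma A_int (hσ : (1/2:ℝ) ≤ σ) {x : ℝ} (hx : 0 < x) (n : ℕ) :
    IntegrableOn (A σ x n) (Ioi 0) := by
  have h1 := (intOn (half_le_sigma_exp hσ n) hx).mul_const (3:ℝ)
  have h2 := (intOn (q_exp (σ := σ) n) hx).mul_const (3:ℝ)
  exact IntegrableOn.congr_fun (h1.add h2) (A_eqOn n) measurableSet_Ioi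

lemma A_nonneg {x : ℝ} {n : ℕ} {u : ℝ} (hu : 0 < u) : 0 ≤ A σ x n u := by
  have h1 : (0:ℝ) ≤ u ^ (σ - 1) := Real.rpow_nonneg hu.le _
  have h2 : (0:ℝ) ≤ u ^ q σ := Real.rpow_nonneg hu.le _
  have h3 : (0:ℝ) ≤ u ^ n := pow_nonneg hu.le _
  have h4 := (Real.exp_pos (-(x*u))).le
  unfold A; positivity

lemma A_integral_nonneg {x : ℝ} (n : ℕ) : 0 ≤ ∫ u in Ioi 0, A σ x n u :=
  setIntegral_nonneg measurableSet_Ioi fun _ hu => A_nonneg hu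

lemma κ_pos (hσ : (1/2:ℝ) ≤ σ) (n : ℕ) : 0 < κ σ n := by
  have h1 : 0 < Real.Gamma ((n:ℝ) + σ) := Real.Gamma_pos_of_pos (by
    have : (0:ℝ) ≤ (n:ℝ) := Nat.cast_nonneg n; linarith)
  have h2 : 0 < Real.Gamma ((n:ℝ) + q σ + 1) := Real.Gamma_pos_of_pos (by
    have : (0:ℝ) ≤ (n:ℝ) := Nat.cast_nonneg n
    have := q_nonneg (σ := σ); linarith)
  have h3 : (0:ℝ) < 2 ^ (q σ + 1 - σ) := Real.rpow_pos_of_pos (by norm_num) _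
  unfold κ; positivity

lemma rpow_half_le {δ x : ℝ} (hδ : 0 ≤ δ) (hx : 1/2 ≤ x) : x ^ (-δ) ≤ 2 ^ δ := by
  have hx0 : (0:ℝ) < x := lt_of_lt_of_le (by norm_num) hx
  calc x ^ (-δ) ≤ ((1:ℝ)/2) ^ (-δ) :=
        Real.rpow_le_rpow_of_nonpos (by norm_num) hx (neg_nonpos.mpr hδ)
    _ = 2 ^ δ := by
        rw [one_div, ← Real.rpow_neg_one (2:ℝ), ← Real.rpow_mul (by norm_num)]
        norm_num

lemma one_div_rpow_eq {x : ℝ} (hx : 0 < x) (e : ℝ) : ((1:ℝ)/x) ^ e = x ^ (-e) := by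
  rw [one_div, ← Real.rpow_neg_one x, ← Real.rpow_mul hx.le]
  norm_num

lemma A_integral_le (hσ : (1/2:ℝ) ≤ σ) (n : ℕ) {x : ℝ} (hx : 1/2 ≤ x) :
    ∫ u in Ioi 0, A σ x n u ≤ κ σ n * x ^ (-((n:ℝ) + σ)) := by
  have hx0 : (0:ℝ) < x := lt_of_lt_of_le (by norm_num) hx
  have h1 := (intOn (half_le_sigma_exp hσ n) hx0).mul_const (3:ℝ)
  have h2 := (intOn (q_exp (σ := σ) n) hx0).mul_const (3:ℝ)
  have heq : ∫ u in Ioi 0, A σ x n u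
      = (∫ u in Ioi 0, u ^ ((n : ℝ) + (σ - 1)) * Real.exp (-(x*u)) * 3)
      + ∫ u in Ioi 0, u ^ ((n : ℝ) + q σ) * Real.exp (-(x*u)) * 3 := by
    rw [← integral_add h1 h2]
    exact (setIntegral_congr_fun measurableSet_Ioi (A_eqOn n)).symm
  rw [heq, integral_mul_const, integral_mul_const, oneInt_val (half_le_sigma_exp hσ n) hx0,
    oneInt_val (q_exp (σ := σ) n) hx0]
  have e1 : (n:ℝ) + (σ - 1) + 1 = (n:ℝ) + σ := by ring
  have e2 : (n:ℝ) + q σ + 1 = (n:ℝ) + q σ + 1 := rfl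
  rw [e1, one_div_rpow_eq hx0, one_div_rpow_eq hx0]
  have hΓ1 : 0 < Real.Gamma ((n:ℝ) + σ) := Real.Gamma_pos_of_pos (by
    have : (0:ℝ) ≤ (n:ℝ) := Nat.cast_nonneg n; linarith)
  have hΓ2 : 0 < Real.Gamma ((n:ℝ) + q σ + 1) := Real.Gamma_pos_of_pos (by
    have : (0:ℝ) ≤ (n:ℝ) := Nat.cast_nonneg n
    have := q_nonneg (σ := σ); linarith)
  have key : x ^ (-((n:ℝ) + q σ + 1)) ≤ 2 ^ (q σ + 1 - σ) * x ^ (-((n:ℝ) + σ)) := by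
    have hd : 0 ≤ q σ + 1 - σ := by have := q_ge (σ := σ); linarith
    have hsplit : x ^ (-((n:ℝ) + q σ + 1)) = x ^ (-((n:ℝ) + σ)) * x ^ (-(q σ + 1 - σ)) := by
      rw [← Real.rpow_add hx0]; ring_nf
    rw [hsplit]
    have h5 := rpow_half_le hd hx
    have h6 : (0:ℝ) ≤ x ^ (-((n:ℝ) + σ)) := (Real.rpow_pos_of_pos hx0 _).le
    nlinarith [Real.rpow_pos_of_pos hx0 (-((n:ℝ) + σ))]
  have h7 : (0:ℝ) < x ^ (-((n:ℝ) + σ)) := Real.rpow_pos_of_pos hx0 _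
  unfold κ
  nlinarith [Real.rpow_pos_of_pos hx0 (-((n:ℝ) + q σ + 1))]


lemma ae_mem : ∀ᵐ p ∂μ2, p.1 ∈ Ioi (0:ℝ) ∧ p.2 ∈ Ioi (0:ℝ) := by
  rw [μ2_def, Measure.prod_restrict]
  filter_upwards [ae_restrict_mem (measurableSet_Ioi.prod measurableSet_Ioi)] with p hp
  exact ⟨hp.1, hp.2⟩

lemma Fi_meas (β : ℕ) (x : ℝ) : AEStronglyMeasurable (Fi σ β x) μ2 := by
  rw [μ2_def, Measure.prod_restrict]
  apply ContinuousOn.aestronglyMeasurable _ (measurableSet_Ioi.prod measurableSet_Ioi)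
  have hc : Continuous fun p : ℝ × ℝ =>
      (p.1 + p.2) ^ β * Real.exp (-(x * (p.1 + p.2))) := by fun_prop
  have h1 : ContinuousOn (fun p : ℝ × ℝ => f σ p.1) (Ioi 0 ×ˢ Ioi 0) := by
    apply ContinuousOn.rpow_const
    · exact (by fun_prop : Continuous fun p : ℝ × ℝ => 1 - Real.exp (-p.1)).continuousOn
    · intro p hp
      exact Or.inl (ne_of_gt (one_sub_exp_neg_pos hp.1))
  have h2 : ContinuousOn (fun p : ℝ × ℝ => f σ p.2) (Ioi 0 ×ˢ Ioi 0) := by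
    apply ContinuousOn.rpow_const
    · exact (by fun_prop : Continuous fun p : ℝ × ℝ => 1 - Real.exp (-p.2)).continuousOn
    · intro p hp
      exact Or.inl (ne_of_gt (one_sub_exp_neg_pos hp.2))
  exact (hc.continuousOn).mul (h1.mul h2)

lemma Fi_nonneg {β : ℕ} {x : ℝ} {p : ℝ × ℝ} (h1 : 0 < p.1) (h2 : 0 < p.2) :
    0 ≤ Fi σ β x p := by
  have := f_nonneg (σ := σ) h1.le
  have := f_nonneg (σ := σ) h2.le
  have h3 : (0:ℝ) ≤ (p.1 + p.2) ^ β := pow_nonneg (by linarith) _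
  have h4 := (Real.exp_pos (-(x * (p.1 + p.2)))).le
  unfold Fi; positivity

lemma Pm_nonneg {β : ℕ} {x : ℝ} {p : ℝ × ℝ} (h1 : 0 < p.1) (h2 : 0 < p.2) :
    0 ≤ Pm σ x β p := by
  refine Finset.sum_nonneg fun i _ => ?_
  have := A_nonneg (σ := σ) (x := x) (n := i) h1
  have := A_nonneg (σ := σ) (x := x) (n := β - i) h2
  positivity

lemma Fi_le_Pm (hσ : σ = 1/2 ∨ 1 ≤ σ) (β : ℕ) {x : ℝ} {p : ℝ × ℝ}
    (h1 : 0 < p.1) (h2 : 0 < p.2) : Fi σ β x p ≤ Pm σ x β p := by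
  obtain ⟨u, v⟩ := p
  have h1 : 0 < u := h1
  have h2 : 0 < v := h2
  have he : Real.exp (-(x * (u + v))) = Real.exp (-(x * u)) * Real.exp (-(x * v)) := by
    rw [← Real.exp_add]; ring_nf
  have hrw : Fi σ β x (u, v)
      = ∑ i ∈ Finset.range (β + 1), (β.choose i : ℝ) *
        ((u ^ i * Real.exp (-(x * u)) * f σ u) * (v ^ (β - i) * Real.exp (-(x * v)) * f σ v)) := by
    show (u + v) ^ β * Real.exp (-(x * (u + v))) * (f σ u * f σ v) = _
    rw [he, add_pow, Finset.sum_mul, Finset.sum_mul]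
    exact Finset.sum_congr rfl fun i _ => by ring
  rw [hrw]
  refine Finset.sum_le_sum fun i _ => ?_
  have hu3 := f_le hσ h1
  have hv3 := f_le hσ h2
  have t1 : u ^ i * Real.exp (-(x * u)) * f σ u ≤ A σ x i u := by
    unfold A
    rw [mul_assoc, mul_assoc]
    refine mul_le_mul_of_nonneg_left ?_ (pow_nonneg h1.le _)
    exact mul_le_mul_of_nonneg_left hu3 (Real.exp_pos _).le
  have t2 : v ^ (β - i) * Real.exp (-(x * v)) * f σ v ≤ A σ x (β - i) v := by
    unfold A
    rw [mul_assoc, mul_assoc]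
    refine mul_le_mul_of_nonneg_left ?_ (pow_nonneg h2.le _)
    exact mul_le_mul_of_nonneg_left hv3 (Real.exp_pos _).le
  refine mul_le_mul_of_nonneg_left ?_ (Nat.cast_nonneg _)
  have hl2 : 0 ≤ v ^ (β - i) * Real.exp (-(x * v)) * f σ v := by
    have := f_nonneg (σ := σ) h2.le
    positivity
  exact mul_le_mul t1 t2 hl2 (A_nonneg h1)

lemma Pm_int (hσ : (1/2:ℝ) ≤ σ) {x : ℝ} (hx : 0 < x) (β : ℕ) :
    Integrable (Pm σ x β) μ2 := by
  refine integrable_finset_sum _ fun i _ => ?_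
  exact ((A_int hσ hx i).mul_prod (A_int hσ hx (β - i))).const_mul _

lemma Pm_integral (hσ : (1/2:ℝ) ≤ σ) {x : ℝ} (hx : 0 < x) (β : ℕ) :
    ∫ p, Pm σ x β p ∂μ2 = ∑ i ∈ Finset.range (β + 1), (β.choose i : ℝ) *
      ((∫ u in Ioi 0, A σ x i u) * (∫ u in Ioi 0, A σ x (β - i) u)) := by
  unfold Pm
  rw [μ2_def]
  rw [integral_finset_sum _
    (fun i _ => ((A_int hσ hx i).mul_prod (A_int hσ hx (β - i))).const_mul _)]
  refine Finset.sum_congr rfl fun i _ => ?_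
  rw [integral_const_mul]
  congr 1
  exact integral_prod_mul (μ := volume.restrict (Ioi 0)) (ν := volume.restrict (Ioi 0))
    (A σ x i) (A σ x (β - i))

lemma Fi_int (hσ : σ = 1/2 ∨ 1 ≤ σ) (β : ℕ) {x : ℝ} (hx : 0 < x) :
    Integrable (Fi σ β x) μ2 := by
  refine (Pm_int (sigma_half hσ) hx β).mono (Fi_meas β x) ?_
  filter_upwards [ae_mem] with p hp
  rw [Real.norm_eq_abs, Real.norm_eq_abs, abs_of_nonneg (Fi_nonneg hp.1 hp.2),
    abs_of_nonneg (Pm_nonneg hp.1 hp.2)]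
  exact Fi_le_Pm hσ β hp.1 hp.2

lemma Fi_mono {β : ℕ} {x1 x2 : ℝ} (h : x1 ≤ x2) {p : ℝ × ℝ}
    (h1 : 0 < p.1) (h2 : 0 < p.2) : Fi σ β x2 p ≤ Fi σ β x1 p := by
  unfold Fi
  have hf1 := f_nonneg (σ := σ) h1.le
  have hf2 := f_nonneg (σ := σ) h2.le
  have hs : 0 < p.1 + p.2 := by linarith
  have hexp : Real.exp (-(x2 * (p.1 + p.2))) ≤ Real.exp (-(x1 * (p.1 + p.2))) := by
    apply Real.exp_le_exp.mpr; nlinarith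
  have h3 : (0:ℝ) ≤ (p.1 + p.2) ^ β := pow_nonneg hs.le _
  have h4 : (0:ℝ) ≤ f σ p.1 * f σ p.2 := mul_nonneg hf1 hf2
  calc (p.1 + p.2) ^ β * Real.exp (-(x2 * (p.1 + p.2))) * (f σ p.1 * f σ p.2)
      ≤ (p.1 + p.2) ^ β * Real.exp (-(x1 * (p.1 + p.2))) * (f σ p.1 * f σ p.2) := by
        refine mul_le_mul_of_nonneg_right ?_ h4
        exact mul_le_mul_of_nonneg_left hexp h3

lemma G_hasDerivAt (hσ : σ = 1/2 ∨ 1 ≤ σ) (β : ℕ) {x : ℝ} (hx : 0 < x) :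
    HasDerivAt (G σ β) (-(G σ (β+1) x)) x := by
  have hx2 : 0 < x / 2 := half_pos hx
  have key := hasDerivAt_integral_of_dominated_loc_of_deriv_le
    (𝕜 := ℝ) (μ := μ2) (x₀ := x) (s := Metric.ball x (x/2))
    (F := fun y p => Fi σ β y p) (F' := fun y p => -(Fi σ (β+1) y p))
    (bound := Pm σ (x/2) (β+1)) (Metric.ball_mem_nhds x hx2)
    (Eventually.of_forall fun y => Fi_meas β y)
    (Fi_int hσ β hx)
    ((Fi_meas (β+1) x).neg)
    ?_ (Pm_int (sigma_half hσ) hx2 (β+1)) ?_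
  · have h := key.2
    rw [integral_neg] at h
    exact h
  · filter_upwards [ae_mem] with p hp
    intro y hy
    have hyx : x/2 ≤ y := by
      have := Metric.mem_ball.mp hy
      rw [Real.dist_eq] at this
      have := abs_lt.mp this
      linarith [this.1]
    rw [Real.norm_eq_abs, abs_neg, abs_of_nonneg (Fi_nonneg hp.1 hp.2)]
    exact le_trans (Fi_mono hyx hp.1 hp.2) (Fi_le_Pm hσ (β+1) hp.1 hp.2)
  · refine Eventually.of_forall fun p => ?_
    intro y _
    have h1 : HasDerivAt (fun y : ℝ => -(y * (p.1 + p.2))) (-(p.1 + p.2)) y :=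
      (hasDerivAt_mul_const (p.1 + p.2)).neg
    have h2 := h1.exp
    have h3 := h2.const_mul ((p.1 + p.2) ^ β)
    have h4 := h3.mul_const (f σ p.1 * f σ p.2)
    convert h4 using 1
    show -(Fi σ (β+1) y p) = _
    unfold Fi
    ring
    all_goals rfl


lemma G_le (hσ : σ = 1/2 ∨ 1 ≤ σ) (β : ℕ) {x : ℝ} (hx : 1/2 ≤ x) :
    G σ β x ≤ (∑ i ∈ Finset.range (β + 1), (β.choose i : ℝ) * (κ σ i * κ σ (β - i)))
      * x ^ (-((β:ℝ) + 2 * σ)) := by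
  have hx0 : (0:ℝ) < x := lt_of_lt_of_le (by norm_num) hx
  have hσ' := sigma_half hσ
  have step1 : G σ β x ≤ ∫ p, Pm σ x β p ∂μ2 := by
    refine integral_mono_ae (Fi_int hσ β hx0) (Pm_int hσ' hx0 β) ?_
    filter_upwards [ae_mem] with p hp
    exact Fi_le_Pm hσ β hp.1 hp.2
  rw [Pm_integral hσ' hx0 β] at step1
  refine le_trans step1 ?_
  rw [Finset.sum_mul]
  refine Finset.sum_le_sum fun i hi => ?_
  have hile : i ≤ β := Nat.lt_succ_iff.mp (Finset.mem_range.mp hi)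
  have h1 := A_integral_le hσ' i hx
  have h2 := A_integral_le hσ' (β - i) hx
  have h3 := A_integral_nonneg (σ := σ) (x := x) i
  have h4 := A_integral_nonneg (σ := σ) (x := x) (β - i)
  have hκ1 := (κ_pos hσ' i).le
  have hκ2 := (κ_pos hσ' (β - i)).le
  have hr1 := (Real.rpow_pos_of_pos hx0 (-((i:ℝ) + σ))).le
  have hr2 := (Real.rpow_pos_of_pos hx0 (-(((β - i : ℕ):ℝ) + σ))).le
  have hprod : (∫ u in Ioi 0, A σ x i u) * (∫ u in Ioi 0, A σ x (β - i) u)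
      ≤ (κ σ i * x ^ (-((i:ℝ) + σ))) * (κ σ (β - i) * x ^ (-(((β - i : ℕ):ℝ) + σ))) :=
    mul_le_mul h1 h2 h4 (by positivity)
  have hcast : ((β - i : ℕ) : ℝ) = (β : ℝ) - (i : ℝ) := by
    exact Nat.cast_sub hile
  have hxx : x ^ (-((i:ℝ) + σ)) * x ^ (-(((β - i : ℕ):ℝ) + σ)) = x ^ (-((β:ℝ) + 2 * σ)) := by
    rw [← Real.rpow_add hx0, hcast]
    ring_nf
  calc (β.choose i : ℝ) * ((∫ u in Ioi 0, A σ x i u) * (∫ u in Ioi 0, A σ x (β - i) u))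
      ≤ (β.choose i : ℝ) * ((κ σ i * x ^ (-((i:ℝ) + σ))) * (κ σ (β - i) * x ^ (-(((β - i : ℕ):ℝ) + σ)))) :=
        mul_le_mul_of_nonneg_left hprod (Nat.cast_nonneg _)
    _ = (β.choose i : ℝ) * (κ σ i * κ σ (β - i)) * (x ^ (-((i:ℝ) + σ)) * x ^ (-(((β - i : ℕ):ℝ) + σ))) := by
        ring
    _ = (β.choose i : ℝ) * (κ σ i * κ σ (β - i)) * x ^ (-((β:ℝ) + 2 * σ)) := by rw [hxx]

lemma Klow_pos (hσ : (1/2:ℝ) ≤ σ) : 0 < Klow σ := by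
  have h1 : (0:ℝ) < min (Real.exp (-(4 * (σ - 1)))) 1 :=
    lt_min (Real.exp_pos _) one_pos
  have h2 : (0:ℝ) < min 1 ((2:ℝ) ^ (σ - 1)) :=
    lt_min one_pos (Real.rpow_pos_of_pos (by norm_num) _)
  unfold Klow; positivity

lemma base_rpow_ge (hσ : σ = 1/2 ∨ 1 ≤ σ) {x u : ℝ} (hx0 : 0 < x)
    (hu1 : 1/x ≤ u) (hu2 : u ≤ 2/x) :
    min 1 ((2:ℝ) ^ (σ - 1)) * (1/x) ^ (σ - 1) ≤ u ^ (σ - 1) := by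
  have h1x : (0:ℝ) < 1/x := by positivity
  have hu0 : (0:ℝ) < u := lt_of_lt_of_le h1x hu1
  rcases hσ with h | h
  · -- σ = 1/2 : exponent negative
    have hσ1 : σ - 1 ≤ 0 := by rw [h]; norm_num
    have h2 : u ^ (σ - 1) ≥ (2/x) ^ (σ - 1) :=
      Real.rpow_le_rpow_of_nonpos hu0 hu2 hσ1
    have h3 : (2/x : ℝ) = 2 * (1/x) := by ring
    have h4 : ((2:ℝ) * (1/x)) ^ (σ - 1) = (2:ℝ) ^ (σ - 1) * (1/x) ^ (σ - 1) :=
      Real.mul_rpow (by norm_num) h1x.le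
    have h5 : min 1 ((2:ℝ) ^ (σ - 1)) ≤ (2:ℝ) ^ (σ - 1) := min_le_right _ _
    have h6 : (0:ℝ) ≤ (1/x) ^ (σ - 1) := Real.rpow_nonneg h1x.le _
    calc min 1 ((2:ℝ) ^ (σ - 1)) * (1/x) ^ (σ - 1)
        ≤ (2:ℝ) ^ (σ - 1) * (1/x) ^ (σ - 1) := mul_le_mul_of_nonneg_right h5 h6
      _ = (2/x) ^ (σ - 1) := by rw [h3, h4]
      _ ≤ u ^ (σ - 1) := h2
  · -- 1 ≤ σ
    have h2 : (1/x) ^ (σ - 1) ≤ u ^ (σ - 1) :=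
      Real.rpow_le_rpow h1x.le hu1 (by linarith)
    have h5 : min 1 ((2:ℝ) ^ (σ - 1)) ≤ 1 := min_le_left _ _
    have h6 : (0:ℝ) ≤ (1/x) ^ (σ - 1) := Real.rpow_nonneg h1x.le _
    nlinarith

lemma G_ge (hσ : σ = 1/2 ∨ 1 ≤ σ) (β : ℕ) {x : ℝ} (hx : 1/2 ≤ x) :
    Klow σ * x ^ (-((β:ℝ) + 2 * σ)) ≤ G σ β x := by
  have hx0 : (0:ℝ) < x := lt_of_lt_of_le (by norm_num) hx
  have h1x : (0:ℝ) < 1/x := by positivity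
  set cl : ℝ := min (Real.exp (-(4 * (σ - 1)))) 1 with hcl
  set m0 : ℝ := min 1 ((2:ℝ) ^ (σ - 1)) with hm0
  have hclpos : 0 < cl := lt_min (Real.exp_pos _) one_pos
  have hm0pos : 0 < m0 := lt_min one_pos (Real.rpow_pos_of_pos (by norm_num) _)
  set B : Set (ℝ × ℝ) := Icc (1/x) (2/x) ×ˢ Icc (1/x) (2/x) with hB
  have hBsub : Icc (1/x) (2/x) ⊆ Ioi (0:ℝ) := fun y hy => lt_of_lt_of_le h1x hy.1
  have hBmeas : MeasurableSet B := measurableSet_Icc.prod measurableSet_Icc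
  have hμB : μ2 B = ENNReal.ofReal (1/x) * ENNReal.ofReal (1/x) := by
    rw [μ2_def, hB, Measure.prod_prod, Measure.restrict_apply measurableSet_Icc,
      Set.inter_eq_self_of_subset_left hBsub, Real.volume_Icc,
      show (2/x - 1/x : ℝ) = 1/x by ring]
  have hμBtop : μ2 B ≠ ⊤ := by
    rw [hμB]; exact ENNReal.mul_ne_top ENNReal.ofReal_ne_top ENNReal.ofReal_ne_top
  have hμBreal : (μ2 B).toReal = (1/x) * (1/x) := by
    rw [hμB, ENNReal.toReal_mul, ENNReal.toReal_ofReal h1x.le]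
  set cbox : ℝ := (1/x) ^ β * Real.exp (-(4:ℝ)) * ((cl * (m0 * (1/x) ^ (σ - 1)))
    * (cl * (m0 * (1/x) ^ (σ - 1)))) with hcbox
  have hbox : ∀ p ∈ B, cbox ≤ Fi σ β x p := by
    rintro ⟨u, v⟩ hp
    obtain ⟨hu, hv⟩ := hp
    have hu1 : 1/x ≤ u := hu.1
    have hu2 : u ≤ 2/x := hu.2
    have hv1 : 1/x ≤ v := hv.1
    have hv2 : v ≤ 2/x := hv.2
    have hu0 : (0:ℝ) < u := lt_of_lt_of_le h1x hu1
    have hv0 : (0:ℝ) < v := lt_of_lt_of_le h1x hv1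
    have hu4 : u ≤ 4 := by
      have : 2/x ≤ 4 := by rw [div_le_iff₀ hx0]; nlinarith
      linarith
    have hv4 : v ≤ 4 := by
      have : 2/x ≤ 4 := by rw [div_le_iff₀ hx0]; nlinarith
      linarith
    have hfu : cl * (m0 * (1/x) ^ (σ - 1)) ≤ f σ u := by
      have h1 := base_rpow_ge hσ hx0 hu1 hu2
      have h2 := f_ge hσ hu0 hu4
      calc cl * (m0 * (1/x) ^ (σ - 1)) ≤ cl * u ^ (σ - 1) :=
            mul_le_mul_of_nonneg_left h1 hclpos.le
        _ ≤ f σ u := h2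
    have hfv : cl * (m0 * (1/x) ^ (σ - 1)) ≤ f σ v := by
      have h1 := base_rpow_ge hσ hx0 hv1 hv2
      have h2 := f_ge hσ hv0 hv4
      calc cl * (m0 * (1/x) ^ (σ - 1)) ≤ cl * v ^ (σ - 1) :=
            mul_le_mul_of_nonneg_left h1 hclpos.le
        _ ≤ f σ v := h2
    have hpow : (1/x) ^ β ≤ (u + v) ^ β := by
      apply pow_le_pow_left₀ h1x.le; linarith
    have hexp : Real.exp (-(4:ℝ)) ≤ Real.exp (-(x * (u + v))) := by
      apply Real.exp_le_exp.mpr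
      have : x * (u + v) ≤ 4 := by
        have : u + v ≤ 4/x := by
          have := hu2; have := hv2; rw [show (4/x:ℝ) = 2/x + 2/x by ring]; linarith
        calc x * (u + v) ≤ x * (4/x) := by nlinarith
          _ = 4 := by field_simp
      linarith
    have hlow0 : (0:ℝ) ≤ cl * (m0 * (1/x) ^ (σ - 1)) := by positivity
    show cbox ≤ (u + v) ^ β * Real.exp (-(x * (u + v))) * (f σ u * f σ v)
    rw [hcbox]
    have e1 : (0:ℝ) ≤ (1/x)^β := pow_nonneg h1x.le _
    have e2 := (Real.exp_pos (-(4:ℝ))).le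
    refine mul_le_mul (mul_le_mul hpow hexp e2 (pow_nonneg (by linarith) _)) ?_ ?_ ?_
    · exact mul_le_mul hfu hfv hlow0 (le_trans hlow0 hfu)
    · positivity
    · positivity
  have hInt := Fi_int hσ β hx0
  have step1 : cbox * (μ2 B).toReal ≤ ∫ p in B, Fi σ β x p ∂μ2 :=
    setIntegral_ge_of_const_le_real hBmeas hμBtop hbox hInt.integrableOn
  have step2 : ∫ p in B, Fi σ β x p ∂μ2 ≤ G σ β x := by
    refine setIntegral_le_integral hInt ?_
    filter_upwards [ae_mem] with p hp
    exact Fi_nonneg hp.1 hp.2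
  refine le_trans ?_ (le_trans step1 step2)
  rw [hμBreal, hcbox]
  -- Klow * x^(-(β+2σ)) = (1/x)^β * exp(-4) * (cl*(m0*(1/x)^(σ-1)))^2 * (1/x * 1/x)
  have hxe : x ^ (-((β:ℝ) + 2 * σ)) = (1/x) ^ ((β:ℝ) + 2 * σ) := (one_div_rpow_eq hx0 _).symm
  have hsplit : ((1:ℝ)/x) ^ ((β:ℝ) + 2 * σ)
      = (1/x) ^ ((β:ℝ)) * ((1/x) ^ (σ - 1) * ((1/x) ^ (σ - 1) * ((1/x) ^ (1:ℝ) * (1/x) ^ (1:ℝ)))) := by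
    rw [← Real.rpow_add h1x, ← Real.rpow_add h1x, ← Real.rpow_add h1x, ← Real.rpow_add h1x]
    ring_nf
  rw [hxe, hsplit, Real.rpow_natCast, Real.rpow_one]
  unfold Klow
  rw [← hcl, ← hm0]
  ring_nf
  apply le_of_eq
  ring

lemma beta_real (hσpos : 0 < σ) {a : ℝ} (ha : 0 < a) :
    Real.Gamma a * Real.Gamma σ
      = Real.Gamma (a + σ) * ∫ u in Ioi 0, Real.exp (-(a * u)) * f σ u := by
  set Br : ℝ := ∫ x in (0:ℝ)..1, x ^ (a - 1) * (1 - x) ^ (σ - 1) with hBrdef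
  have hBr : Complex.betaIntegral (a : ℂ) (σ : ℂ) = (Br : ℂ) := by
    rw [hBrdef, ← intervalIntegral.integral_ofReal, Complex.betaIntegral]
    refine intervalIntegral.integral_congr fun x hx => ?_
    have hx' : x ∈ Icc (0:ℝ) 1 := by rwa [uIcc_of_le zero_le_one] at hx
    have h1x : (0:ℝ) ≤ 1 - x := by linarith [hx'.2]
    rw [Complex.ofReal_mul, Complex.ofReal_cpow hx'.1, Complex.ofReal_cpow h1x]
    push_cast
    ring
  have hc := Complex.Gamma_mul_Gamma_eq_betaIntegral (s := (a:ℂ)) (t := (σ:ℂ))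
    (by simpa using ha) (by simpa using hσpos)
  rw [hBr] at hc
  have hreal : Real.Gamma a * Real.Gamma σ = Real.Gamma (a + σ) * Br := by
    rw [← Complex.ofReal_add] at hc
    rw [Complex.Gamma_ofReal, Complex.Gamma_ofReal, Complex.Gamma_ofReal] at hc
    exact_mod_cast hc
  rw [hreal]
  congr 1
  -- Br = Laplace integral
  rw [hBrdef, intervalIntegral.integral_of_le zero_le_one, integral_Ioc_eq_integral_Ioo]
  have himg : Ioo (0:ℝ) 1 = (fun u => Real.exp (-u)) '' (Ioi 0) := by
    ext y
    constructor
    · rintro ⟨hy0, hy1⟩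
      refine ⟨-Real.log y, ?_, by simp [Real.exp_log hy0]⟩
      simp only [mem_Ioi]
      have := Real.log_neg hy0 hy1
      linarith
    · rintro ⟨u, hu, rfl⟩
      have := one_sub_exp_neg_pos (mem_Ioi.mp hu)
      exact ⟨Real.exp_pos _, by linarith⟩
  have hderiv : ∀ u ∈ Ioi (0:ℝ),
      HasDerivWithinAt (fun u : ℝ => Real.exp (-u)) (-Real.exp (-u)) (Ioi 0) u := by
    intro u _
    have h1 : HasDerivAt (fun u : ℝ => Real.exp (-u)) (Real.exp (-u) * (-1)) u :=
      ((hasDerivAt_id u).neg).exp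
    simpa [mul_neg_one] using h1.hasDerivWithinAt
  have hinj : InjOn (fun u : ℝ => Real.exp (-u)) (Ioi 0) := by
    intro u _ v _ h
    have := congrArg Real.log h
    simpa [Real.log_exp, neg_inj] using this
  rw [himg, integral_image_eq_integral_abs_deriv_smul measurableSet_Ioi hderiv hinj]
  refine setIntegral_congr_fun measurableSet_Ioi fun u hu => ?_
  have hu0 : (0:ℝ) < u := hu
  rw [smul_eq_mul, abs_neg, abs_of_pos (Real.exp_pos _)]
  have h1 : (Real.exp (-u)) ^ (a - 1) = Real.exp (-u * (a - 1)) := by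
    rw [Real.rpow_def_of_pos (Real.exp_pos _), Real.log_exp]
  have h2 : Real.exp (-u) * Real.exp (-u * (a - 1)) = Real.exp (-(a * u)) := by
    rw [← Real.exp_add]; congr 1; ring
  rw [h1, ← mul_assoc, h2]
  rfl

lemma gamma_ratio (hσpos : 0 < σ) {a : ℝ} (ha : 0 < a) :
    Real.Gamma a / Real.Gamma (a + σ)
      = (∫ u in Ioi 0, Real.exp (-(a * u)) * f σ u) / Real.Gamma σ := by
  have h := beta_real hσpos ha
  have h1 : Real.Gamma σ ≠ 0 := (Real.Gamma_pos_of_pos hσpos).ne'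
  have h2 : Real.Gamma (a + σ) ≠ 0 := (Real.Gamma_pos_of_pos (by linarith)).ne'
  field_simp
  linarith [h]

lemma sq_to_G {a : ℝ} :
    (∫ u in Ioi 0, Real.exp (-(a * u)) * f σ u) ^ 2 = G σ 0 a := by
  have hfun : ∀ p : ℝ × ℝ, Fi σ 0 a p
      = (Real.exp (-(a * p.1)) * f σ p.1) * (Real.exp (-(a * p.2)) * f σ p.2) := by
    intro p
    unfold Fi
    rw [pow_zero, one_mul, show -(a * (p.1 + p.2)) = -(a * p.1) + -(a * p.2) by ring,
      Real.exp_add]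
    ring
  rw [sq]
  have : G σ 0 a = ∫ p, (Real.exp (-(a * p.1)) * f σ p.1) * (Real.exp (-(a * p.2)) * f σ p.2)
      ∂((volume.restrict (Ioi 0)).prod (volume.restrict (Ioi 0))) := by
    unfold G
    rw [μ2_def]
    exact integral_congr_ae (Eventually.of_forall hfun)
  rw [this]
  exact (integral_prod_mul (fun u => Real.exp (-(a * u)) * f σ u)
    (fun u => Real.exp (-(a * u)) * f σ u)).symm


end

end XiAux

open XiAux in
/-- the function `ξ(t) = C·(Γ((t-k)/2)/Γ((t+d+k+1)/2))²` satisfies, for every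
`β ∈ ℕ`, the two-sided estimate `(-1)^β ξ^{(β)}(t) ≍ t^{-(d+2k+1)-β}` on `[k+1, ∞)`;
in particular (`β = 0`) `ξ(t) ≍ t^{-(d+2k+1)}` and the derivatives of `ξ` alternate in sign. -/
theorem xi_derivative_asymptotics (d k : ℕ) (C : ℝ) (hC : 0 < C) :
    ∀ β : ℕ, ∃ c₁ c₂ : ℝ, 0 < c₁ ∧ 0 < c₂ ∧
      ∀ t : ℝ, (k : ℝ) + 1 ≤ t →
        c₁ * t ^ (-((d : ℝ) + 2 * k + 1) - β) ≤
          (-1 : ℝ) ^ β *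
            iteratedDeriv β
              (fun s : ℝ =>
                C * (Real.Gamma ((s - k) / 2) / Real.Gamma ((s + d + k + 1) / 2)) ^ 2) t ∧
        (-1 : ℝ) ^ β *
            iteratedDeriv β
              (fun s : ℝ =>
                C * (Real.Gamma ((s - k) / 2) / Real.Gamma ((s + d + k + 1) / 2)) ^ 2) t ≤
          c₂ * t ^ (-((d : ℝ) + 2 * k + 1) - β) := by
  intro β
  set σ : ℝ := ((d : ℝ) + 2 * (k : ℝ) + 1) / 2 with hσdef
  have hσor : σ = 1/2 ∨ 1 ≤ σ := by
    rcases Nat.eq_zero_or_pos (d + 2 * k) with h | h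
    · left
      obtain ⟨hd, hk⟩ := Nat.add_eq_zero.mp h
      have hk' : k = 0 := by omega
      rw [hσdef, hd, hk']
      norm_num
    · right
      have h1 : (1:ℝ) ≤ (d : ℝ) + 2 * (k : ℝ) := by
        have := (Nat.one_le_cast (α := ℝ)).mpr h
        push_cast at this
        linarith
      rw [hσdef]; linarith
  have hσ12 : (1/2 : ℝ) ≤ σ := sigma_half hσor
  have hσpos : 0 < σ := by linarith
  have hΓσ : 0 < Real.Gamma σ := Real.Gamma_pos_of_pos hσpos
  set c' : ℝ := C / Real.Gamma σ ^ 2 with hc'def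
  have hc' : 0 < c' := by rw [hc'def]; positivity
  -- representation of iterated derivatives
  have repr : ∀ n : ℕ, ∀ t : ℝ, (k : ℝ) < t →
      iteratedDeriv n
        (fun s : ℝ =>
          C * (Real.Gamma ((s - k) / 2) / Real.Gamma ((s + d + k + 1) / 2)) ^ 2) t
      = (-(1/2 : ℝ)) ^ n * c' * G σ n ((t - k) / 2) := by
    intro n
    induction n with
    | zero =>
      intro t ht
      have ha : 0 < (t - (k:ℝ)) / 2 := by linarith
      rw [iteratedDeriv_zero]
      show C * (Real.Gamma ((t - k) / 2) / Real.Gamma ((t + d + k + 1) / 2)) ^ 2 = _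
      have hsum : ((t : ℝ) + d + k + 1) / 2 = (t - k) / 2 + σ := by
        rw [hσdef]; push_cast; ring
      rw [hsum, gamma_ratio hσpos ha, div_pow, sq_to_G, pow_zero, one_mul, hc'def]
      ring
    | succ n ih =>
      intro t ht
      rw [iteratedDeriv_succ]
      have hEq : iteratedDeriv n
          (fun s : ℝ =>
            C * (Real.Gamma ((s - k) / 2) / Real.Gamma ((s + d + k + 1) / 2)) ^ 2)
          =ᶠ[nhds t] fun t' : ℝ => (-(1/2 : ℝ)) ^ n * c' * G σ n ((t' - k) / 2) := by
        filter_upwards [Ioi_mem_nhds ht] with t' ht'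
        exact ih t' ht'
      rw [hEq.deriv_eq]
      have ha : 0 < (t - (k:ℝ)) / 2 := by linarith
      have hin : HasDerivAt (fun t' : ℝ => (t' - (k:ℝ)) / 2) (1/2 : ℝ) t := by
        have h := ((hasDerivAt_id t).sub_const (k:ℝ)).div_const 2
        simpa using h
      have hcomp : HasDerivAt (fun t' : ℝ => G σ n ((t' - (k:ℝ)) / 2))
          (-(G σ (n+1) ((t - (k:ℝ)) / 2)) * (1/2)) t :=
        by have := (G_hasDerivAt hσor n ha).comp t hin; exact this
      have hder : deriv (fun t' : ℝ => (-(1/2 : ℝ)) ^ n * c' * G σ n ((t' - (k:ℝ)) / 2)) t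
          = (-(1/2 : ℝ)) ^ n * c' * (-(G σ (n+1) ((t - (k:ℝ)) / 2)) * (1/2)) := by
        apply HasDerivAt.deriv
        exact hcomp.const_mul ((-(1/2 : ℝ)) ^ n * c')
      rw [hder]
      ring
  -- constants
  set Kup : ℝ := ∑ i ∈ Finset.range (β + 1), (β.choose i : ℝ) * (κ σ i * κ σ (β - i))
    with hKup
  have hKupPos : 0 < Kup := by
    rw [hKup]
    refine Finset.sum_pos (fun i hi => ?_) ⟨0, Finset.mem_range.mpr (Nat.succ_pos β)⟩
    have h1 : 0 < β.choose i := Nat.choose_pos (Nat.lt_succ_iff.mp (Finset.mem_range.mp hi))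
    have h2 := κ_pos hσ12 i
    have h3 := κ_pos hσ12 (β - i)
    have h4 : (0:ℝ) < (β.choose i : ℝ) := by exact_mod_cast h1
    positivity
  set e : ℝ := (β : ℝ) + 2 * σ with he
  have hepos : 0 < e := by
    rw [he]
    have : (0:ℝ) ≤ (β:ℝ) := Nat.cast_nonneg β
    linarith
  refine ⟨(1/2 : ℝ) ^ β * c' * (Klow σ * (2:ℝ) ^ e),
    (1/2 : ℝ) ^ β * c' * (Kup * (2 * ((k:ℝ) + 1)) ^ e), ?_, ?_, ?_⟩
  · have := Klow_pos hσ12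
    have h2 : (0:ℝ) < (2:ℝ) ^ e := Real.rpow_pos_of_pos (by norm_num) _
    positivity
  · have h2 : (0:ℝ) < (2 * ((k:ℝ) + 1)) ^ e := Real.rpow_pos_of_pos (by positivity) _
    positivity
  intro t ht
  have hk0 : (0:ℝ) ≤ (k:ℝ) := Nat.cast_nonneg k
  have ht0 : 0 < t := by linarith
  have hklt : (k:ℝ) < t := by linarith
  have hx : (1/2 : ℝ) ≤ (t - (k:ℝ)) / 2 := by linarith
  have hx0 : (0:ℝ) < (t - (k:ℝ)) / 2 := by linarith
  have hrepr := repr β t hklt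
  have hexp : (-((d : ℝ) + 2 * k + 1) - β) = -e := by
    rw [he, hσdef]; push_cast; ring
  rw [hrepr, hexp]
  have hsign : (-1 : ℝ) ^ β * ((-(1/2 : ℝ)) ^ β * c' * G σ β ((t - (k:ℝ)) / 2))
      = (1/2 : ℝ) ^ β * (c' * G σ β ((t - (k:ℝ)) / 2)) := by
    calc (-1 : ℝ) ^ β * ((-(1/2 : ℝ)) ^ β * c' * G σ β ((t - (k:ℝ)) / 2))
        = ((-1 : ℝ) * (-(1/2 : ℝ))) ^ β * (c' * G σ β ((t - (k:ℝ)) / 2)) := by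
          rw [mul_pow]; ring
      _ = (1/2 : ℝ) ^ β * (c' * G σ β ((t - (k:ℝ)) / 2)) := by norm_num
  rw [hsign]
  have hG1 := G_ge hσor β hx
  have hG2 := G_le hσor β hx
  rw [← he] at hG1 hG2
  rw [← hKup] at hG2
  have hxle : (t - (k:ℝ)) / 2 ≤ t / 2 := by linarith
  have hxge : t / (2 * ((k:ℝ) + 1)) ≤ (t - (k:ℝ)) / 2 := by
    rw [div_le_div_iff₀ (by positivity) (by norm_num)]
    nlinarith
  have hb1 : (t / 2 : ℝ) ^ (-e) ≤ ((t - (k:ℝ)) / 2) ^ (-e) :=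
    Real.rpow_le_rpow_of_nonpos hx0 hxle (by linarith)
  have hb2 : ((t - (k:ℝ)) / 2) ^ (-e) ≤ (t / (2 * ((k:ℝ) + 1))) ^ (-e) :=
    Real.rpow_le_rpow_of_nonpos (by positivity) hxge (by linarith)
  have hsplit1 : (t / 2 : ℝ) ^ (-e) = (2:ℝ) ^ e * t ^ (-e) := by
    rw [Real.div_rpow ht0.le (by norm_num : (0:ℝ) ≤ 2),
      Real.rpow_neg (by norm_num : (0:ℝ) ≤ 2)]
    rw [division_def, inv_inv]
    ring
  have hsplit2 : (t / (2 * ((k:ℝ) + 1))) ^ (-e) = (2 * ((k:ℝ) + 1)) ^ e * t ^ (-e) := by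
    rw [Real.div_rpow ht0.le (by positivity : (0:ℝ) ≤ 2 * ((k:ℝ) + 1)),
      Real.rpow_neg (by positivity : (0:ℝ) ≤ 2 * ((k:ℝ) + 1))]
    rw [division_def, inv_inv]
    ring
  have hpowβ : (0:ℝ) ≤ (1/2 : ℝ) ^ β := by positivity
  constructor
  · calc (1/2 : ℝ) ^ β * c' * (Klow σ * (2:ℝ) ^ e) * t ^ (-e)
        = (1/2 : ℝ) ^ β * (c' * (Klow σ * ((t / 2) ^ (-e)))) := by
          rw [hsplit1]; ring
      _ ≤ (1/2 : ℝ) ^ β * (c' * (Klow σ * (((t - (k:ℝ)) / 2) ^ (-e)))) := by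
          have h1 := mul_le_mul_of_nonneg_left hb1 (Klow_pos hσ12).le
          have h2 := mul_le_mul_of_nonneg_left h1 hc'.le
          exact mul_le_mul_of_nonneg_left h2 hpowβ
      _ ≤ (1/2 : ℝ) ^ β * (c' * G σ β ((t - (k:ℝ)) / 2)) := by
          have h2 := mul_le_mul_of_nonneg_left hG1 hc'.le
          exact mul_le_mul_of_nonneg_left h2 hpowβ
  · calc (1/2 : ℝ) ^ β * (c' * G σ β ((t - (k:ℝ)) / 2))
        ≤ (1/2 : ℝ) ^ β * (c' * (Kup * (((t - (k:ℝ)) / 2) ^ (-e)))) := by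
          have h2 := mul_le_mul_of_nonneg_left hG2 hc'.le
          exact mul_le_mul_of_nonneg_left h2 hpowβ
      _ ≤ (1/2 : ℝ) ^ β * (c' * (Kup * ((t / (2 * ((k:ℝ) + 1))) ^ (-e)))) := by
          have h1 := mul_le_mul_of_nonneg_left hb2 hKupPos.le
          have h2 := mul_le_mul_of_nonneg_left h1 hc'.le
          exact mul_le_mul_of_nonneg_left h2 hpowβ
      _ = (1/2 : ℝ) ^ β * c' * (Kup * (2 * ((k:ℝ) + 1)) ^ e) * t ^ (-e) := by
          rw [hsplit2]; ring
end

section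
/- Let M be an n×n symmetric positive semidefinite matrix whose eigenvalues satisfy c₋ n j^{-α} ≤ λ_j(M) ≤ c₊ n j^{-α} for j = 1,...,n, with α > 1. Then for all λ in the range c₁ n^{1-α} ≤ λ ≤ c₂ n, the effective dimension d_eff(λ) := tr(M(M+λI)^{-1}) = Σ_{j=1}^n λ_j/(λ_j + λ) satisfies d_eff(λ) ≍ (n/λ)^{1/α}, with implied constants depending only on α, c₋, c₊, c₁, c₂. -/
open Matrix

private lemma eff_dim_trace {n : ℕ} (M : Matrix (Fin n) (Fin n) ℝ) (hM : M.PosSemidef) (lam : ℝ)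
    (hpos : ∀ j, 0 < hM.1.eigenvalues j + lam) :
    (M * (M + lam • (1 : Matrix (Fin n) (Fin n) ℝ))⁻¹).trace =
      ∑ j : Fin n, hM.1.eigenvalues j / (hM.1.eigenvalues j + lam) := by
  set d := hM.1.eigenvalues with hd
  set U : Matrix (Fin n) (Fin n) ℝ := (hM.1.eigenvectorUnitary : Matrix (Fin n) (Fin n) ℝ) with hUdef
  have hU : U * star U = 1 := mem_unitaryGroup_iff.mp (hM.1.eigenvectorUnitary).2
  have hU' : star U * U = 1 := mem_unitaryGroup_iff'.mp (hM.1.eigenvectorUnitary).2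
  have hspec : M = U * diagonal d * star U := by
    have := hM.1.spectral_theorem
    simpa using this
  set N : Matrix (Fin n) (Fin n) ℝ := U * diagonal (fun i => (d i + lam)⁻¹) * star U with hN
  have hMlam : M + lam • (1 : Matrix (Fin n) (Fin n) ℝ)
      = U * diagonal (fun i => d i + lam) * star U := by
    have : (diagonal (fun i => d i + lam) : Matrix (Fin n) (Fin n) ℝ)
        = diagonal d + lam • 1 := by
      ext i j
      by_cases h : i = j <;> simp [diagonal, h, Matrix.add_apply, Matrix.smul_apply, Matrix.one_apply]
    rw [this, mul_add, add_mul, ← hspec]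
    congr 1
    rw [mul_smul_comm, smul_mul_assoc, mul_one, hU]
  have h1 : (M + lam • (1 : Matrix (Fin n) (Fin n) ℝ)) * N = 1 := by
    rw [hMlam, hN]
    calc (U * diagonal (fun i => d i + lam) * star U) *
        (U * diagonal (fun i => (d i + lam)⁻¹) * star U)
        = U * (diagonal (fun i => d i + lam) * (star U * U) *
            diagonal (fun i => (d i + lam)⁻¹)) * star U := by
          noncomm_ring
      _ = 1 := by
          rw [hU', mul_one, diagonal_mul_diagonal]
          have : (fun i => (d i + lam) * (d i + lam)⁻¹) = fun _ => (1:ℝ) := by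
            funext i
            exact mul_inv_cancel₀ (hpos i).ne'
          rw [this, diagonal_one, mul_one, hU]
  have hinv : (M + lam • (1 : Matrix (Fin n) (Fin n) ℝ))⁻¹ = N := inv_eq_right_inv h1
  rw [hinv, hN, hspec]
  calc ((U * diagonal d * star U) * (U * diagonal (fun i => (d i + lam)⁻¹) * star U)).trace
      = (U * (diagonal d * (star U * U) * diagonal (fun i => (d i + lam)⁻¹)) * star U).trace := by
        noncomm_ring
    _ = ∑ j : Fin n, d j / (d j + lam) := by
        rw [hU', mul_one, diagonal_mul_diagonal, trace_mul_cycle, hU', one_mul,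
          trace_diagonal]
        simp [div_eq_mul_inv]

lemma bern {y β : ℝ} (hβ : 0 < β) (hy0 : 0 < y) (hy1 : y < 1) :
    1 + β * y ≤ (1 - y) ^ (-β) := by
  have h1y : 0 < 1 - y := by linarith
  have h4 : (0:ℝ) < (1 - y) ^ β := Real.rpow_pos_of_pos h1y β
  rcases le_or_gt β 1 with hβ1 | hβ1
  · have h : (1 - y) ^ β ≤ 1 - β * y := by
      have := rpow_one_add_le_one_add_mul_self (s := -y) (by linarith) hβ.le hβ1
      rw [← sub_eq_add_neg] at this
      nlinarith [this]
    rw [Real.rpow_neg h1y.le, ← one_div, le_div_iff₀ h4]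
    have hpos : (0:ℝ) ≤ 1 + β * y := by positivity
    nlinarith [mul_le_mul_of_nonneg_left h hpos, sq_nonneg (β * y)]
  · have h := one_add_mul_self_le_rpow_one_add (s := y / (1 - y)) (by have := div_nonneg hy0.le h1y.le; linarith) hβ1.le
    have he : 1 + y / (1 - y) = (1 - y)⁻¹ := by field_simp; ring
    rw [he] at h
    rw [Real.rpow_neg h1y.le, ← Real.inv_rpow h1y.le]
    have hyy : y ≤ y / (1 - y) := by
      rw [le_div_iff₀ h1y]; nlinarith
    calc 1 + β * y ≤ 1 + β * (y / (1 - y)) := by nlinarith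
      _ ≤ ((1 - y)⁻¹) ^ β := h

lemma step {β x : ℝ} (hβ : 0 < β) (hx : 1 ≤ x) :
    β * (x + 1) ^ (-β - 1) ≤ x ^ (-β) - (x + 1) ^ (-β) := by
  have hx0 : 0 < x := lt_of_lt_of_le one_pos hx
  have hx1 : 0 < x + 1 := by linarith
  set y : ℝ := 1 / (x + 1) with hy
  have hy0 : 0 < y := by positivity
  have hy1 : y < 1 := by rw [hy, div_lt_one hx1]; linarith
  have hb := bern hβ hy0 hy1
  have hfac : x ^ (-β) = (x + 1) ^ (-β) * (1 - y) ^ (-β) := by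
    have h1y : 1 - y = x / (x + 1) := by rw [hy]; field_simp; ring
    rw [h1y, ← Real.mul_rpow hx1.le (by positivity)]
    congr 1
    field_simp
  have hpow : (x + 1) ^ (-β - 1) = (x + 1) ^ (-β) * y := by
    rw [hy, one_div, ← Real.rpow_neg_one (x + 1), ← Real.rpow_add hx1]
    norm_num [sub_eq_add_neg]
  have hp : (0:ℝ) < (x + 1) ^ (-β) := Real.rpow_pos_of_pos hx1 _
  rw [hfac, hpow]
  calc β * ((x + 1) ^ (-β) * y) = (x + 1) ^ (-β) * (β * y) := by ring
    _ ≤ (x + 1) ^ (-β) * ((1 - y) ^ (-β) - 1) := by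
        apply mul_le_mul_of_nonneg_left _ hp.le
        linarith
    _ = (x + 1) ^ (-β) * (1 - y) ^ (-β) - (x + 1) ^ (-β) := by ring

lemma tailX{α : ℝ} (hα : 1 < α) {J : ℕ} (hJ : 1 ≤ J) (n : ℕ) :
    ∑ j ∈ Finset.Ico J n, ((j : ℝ) + 1) ^ (-α) ≤ (J : ℝ) ^ (1 - α) / (α - 1) := by
  set β : ℝ := α - 1 with hβdef
  have hβ : 0 < β := by simp [hβdef]; linarith
  have hJR : (1:ℝ) ≤ (J:ℝ) := by exact_mod_cast hJ
  have hfJ : (0:ℝ) < (J:ℝ) ^ (-β) := Real.rpow_pos_of_pos (by linarith) _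
  have h1α : (1:ℝ) - α = -β := by rw [hβdef]; ring
  rw [h1α]
  rcases le_or_gt J n with hn | hn
  · set f : ℕ → ℝ := fun j => (j : ℝ) ^ (-β) with hf
    have tele : ∑ j ∈ Finset.Ico J n, (f j - f (j + 1)) = f J - f n := by
      rw [Finset.sum_Ico_eq_sub _ hn, Finset.sum_range_sub' f, Finset.sum_range_sub' f]
      ring
    have hpt : ∀ j ∈ Finset.Ico J n, ((j : ℝ) + 1) ^ (-α) ≤ (f j - f (j + 1)) / β := by
      intro j hj
      have hj1 : 1 ≤ j := le_trans hJ (Finset.mem_Ico.mp hj).1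
      have hx : (1:ℝ) ≤ (j:ℝ) := by exact_mod_cast hj1
      have := step hβ hx
      have hexp : -β - 1 = -α := by rw [hβdef]; ring
      rw [hexp] at this
      rw [le_div_iff₀ hβ]
      have hcast : f (j + 1) = ((j:ℝ) + 1) ^ (-β) := by rw [hf]; push_cast; ring_nf
      rw [hcast, hf]
      linarith
    calc ∑ j ∈ Finset.Ico J n, ((j : ℝ) + 1) ^ (-α)
        ≤ ∑ j ∈ Finset.Ico J n, (f j - f (j + 1)) / β := Finset.sum_le_sum hpt
      _ = (f J - f n) / β := by rw [← tele, Finset.sum_div]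
      _ ≤ (J:ℝ) ^ (-β) / β := by
          have hfn : (0:ℝ) ≤ f n := by rw [hf]; positivity
          have hfJ' : f J - f n ≤ (J:ℝ) ^ (-β) := by rw [hf]; simp; linarith [hfn]
          exact div_le_div_of_nonneg_right hfJ' hβ.le |>.trans_eq rfl
      _ = (J:ℝ) ^ (-β) / (α - 1) := by rw [hβdef]
  · rw [Finset.Ico_eq_empty (by omega)]
    simp
    positivity

lemma upperX(α cplus c₂ : ℝ) (hα : 1 < α) (hcp : 0 < cplus) (hc₂ : 0 < c₂) :
    ∃ C₂ : ℝ, 0 < C₂ ∧ ∀ n : ℕ, 0 < n → ∀ d : Fin n → ℝ, (∀ j, 0 ≤ d j) →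
      (∀ j : Fin n, d j ≤ cplus * n * ((j : ℝ) + 1) ^ (-α)) →
      ∀ lam : ℝ, 0 < lam → lam ≤ c₂ * n →
      ∑ j : Fin n, d j / (d j + lam) ≤ C₂ * ((n : ℝ) / lam) ^ (1 / α) := by
  have hα0 : (0:ℝ) < α := by linarith
  have hα1 : (0:ℝ) < α - 1 := by linarith
  have hA : (0:ℝ) < α / (α - 1) := div_pos hα0 hα1
  refine ⟨(α / (α - 1)) * (1 + (c₂ / cplus) ^ (1/α)) * cplus ^ (1/α),
    by have := hA; positivity, ?_⟩
  intro n hn d hd0 hdub lam hlam hlamub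
  have hnR : (0:ℝ) < (n:ℝ) := by exact_mod_cast hn
  set u : ℝ := (cplus * n / lam) ^ (1/α) with hu
  have hu0 : 0 < u := by positivity
  set J : ℕ := ⌊u⌋₊ + 1 with hJ
  have hJ1 : 1 ≤ J := Nat.le_add_left 1 _
  have hJR : (0:ℝ) < (J:ℝ) := by exact_mod_cast Nat.succ_pos _
  have huJ : u ≤ (J:ℝ) := by
    have := Nat.lt_floor_add_one u
    push_cast [hJ]
    push_cast at this
    linarith
  have huα : u ^ α = cplus * n / lam := by
    rw [hu, ← Real.rpow_mul (by positivity), one_div, inv_mul_cancel₀ (ne_of_gt hα0),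
      Real.rpow_one]
  have hJα : cplus * n / lam ≤ (J:ℝ) ^ α := by
    rw [← huα]; exact Real.rpow_le_rpow hu0.le huJ hα0.le
  -- termwise bound
  have hterm : ∀ j : Fin n, d j / (d j + lam) ≤
      min 1 (cplus * n * ((j:ℝ) + 1) ^ (-α) / lam) := by
    intro j
    have hdj := hd0 j
    refine le_min ?_ ?_
    · rw [div_le_one (by linarith)]; linarith
    · calc d j / (d j + lam) ≤ d j / lam :=
            div_le_div_of_nonneg_left hdj hlam (by linarith) |>.trans_eq rfl
        _ ≤ cplus * n * ((j:ℝ) + 1) ^ (-α) / lam :=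
            div_le_div_of_nonneg_right (hdub j) hlam.le
  have hsum1 : ∑ j : Fin n, d j / (d j + lam) ≤
      ∑ k ∈ Finset.range n, min 1 (cplus * n * ((k:ℝ) + 1) ^ (-α) / lam) := by
    rw [← Fin.sum_univ_eq_sum_range (fun k => min 1 (cplus * n * ((k:ℝ) + 1) ^ (-α) / lam)) n]
    exact Finset.sum_le_sum (fun j _ => hterm j)
  have hsum2 : ∑ k ∈ Finset.range n, min 1 (cplus * n * ((k:ℝ) + 1) ^ (-α) / lam) ≤
      ∑ k ∈ Finset.range n,
        (if k < J then (1:ℝ) else cplus * n * ((k:ℝ) + 1) ^ (-α) / lam) := by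
    apply Finset.sum_le_sum
    intro k _
    by_cases h : k < J
    · simp [h]
    · simp [h]
  have hsplit : ∑ k ∈ Finset.range n,
        (if k < J then (1:ℝ) else cplus * n * ((k:ℝ) + 1) ^ (-α) / lam)
      ≤ (J:ℝ) + (cplus * n / lam) * ((J:ℝ) ^ (1 - α) / (α - 1)) := by
    rw [Finset.sum_ite]
    gcongr ?_ + ?_
    · rw [Finset.sum_const, nsmul_eq_mul, mul_one]
      have hsub : Finset.filter (fun k => k < J) (Finset.range n) ⊆ Finset.range J := by
        intro k hk
        simp only [Finset.mem_filter, Finset.mem_range] at *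
        exact hk.2
      have := Finset.card_le_card hsub
      rw [Finset.card_range] at this
      exact_mod_cast this
    · have hfe : Finset.filter (fun k => ¬ k < J) (Finset.range n) = Finset.Ico J n := by
        ext k
        simp only [Finset.mem_filter, Finset.mem_range, Finset.mem_Ico]
        omega
      rw [hfe]
      have : ∑ k ∈ Finset.Ico J n, cplus * n * ((k:ℝ) + 1) ^ (-α) / lam
          = (cplus * n / lam) * ∑ k ∈ Finset.Ico J n, ((k:ℝ) + 1) ^ (-α) := by
        rw [Finset.mul_sum]
        apply Finset.sum_congr rfl
        intro k _
        ring
      rw [this]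
      exact mul_le_mul_of_nonneg_left (tailX hα hJ1 n) (by positivity)
  have hJtail : (cplus * n / lam) * ((J:ℝ) ^ (1 - α) / (α - 1)) ≤ (J:ℝ) / (α - 1) := by
    have h1 : (J:ℝ) ^ (1 - α) = (J:ℝ) * ((J:ℝ) ^ α)⁻¹ := by
      rw [show (1:ℝ) - α = 1 + (-α) by ring, Real.rpow_add hJR, Real.rpow_one,
        Real.rpow_neg hJR.le]
    rw [h1]
    have hJα0 : (0:ℝ) < (J:ℝ) ^ α := Real.rpow_pos_of_pos hJR _
    have hle1 : (cplus * n / lam) * ((J:ℝ) ^ α)⁻¹ ≤ 1 := by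
      rw [← div_eq_mul_inv, div_le_one hJα0]
      exact hJα
    calc (cplus * n / lam) * ((J:ℝ) * ((J:ℝ) ^ α)⁻¹ / (α - 1))
        = ((cplus * n / lam) * ((J:ℝ) ^ α)⁻¹) * ((J:ℝ) / (α - 1)) := by ring
      _ ≤ 1 * ((J:ℝ) / (α - 1)) := by
          exact mul_le_mul_of_nonneg_right hle1 (div_nonneg hJR.le hα1.le)
      _ = (J:ℝ) / (α - 1) := one_mul _
  -- bound J by u
  have huc : (cplus / c₂) ^ (1/α) ≤ u := by
    apply Real.rpow_le_rpow (by positivity) _ (by positivity)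
    rw [div_le_div_iff₀ hc₂ hlam]
    calc cplus * lam ≤ cplus * (c₂ * n) := by nlinarith
      _ = cplus * n * c₂ := by ring
  have hone : (1:ℝ) ≤ (c₂ / cplus) ^ (1/α) * u := by
    calc (1:ℝ) = (c₂ / cplus) ^ (1/α) * (cplus / c₂) ^ (1/α) := by
          rw [← Real.mul_rpow (by positivity) (by positivity)]
          rw [div_mul_div_comm]
          rw [show c₂ * cplus / (cplus * c₂) = 1 by rw [mul_comm c₂ cplus]; field_simp]
          simp
      _ ≤ (c₂ / cplus) ^ (1/α) * u := by
          apply mul_le_mul_of_nonneg_left huc (by positivity)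
  have hJu : (J:ℝ) ≤ (1 + (c₂ / cplus) ^ (1/α)) * u := by
    have hfl : (⌊u⌋₊:ℝ) ≤ u := Nat.floor_le hu0.le
    have : (J:ℝ) = (⌊u⌋₊:ℝ) + 1 := by rw [hJ]; push_cast; ring
    rw [this]
    nlinarith
  have hut : u = cplus ^ (1/α) * ((n:ℝ) / lam) ^ (1/α) := by
    rw [hu, ← Real.mul_rpow hcp.le (by positivity)]
    congr 1
    field_simp
  calc ∑ j : Fin n, d j / (d j + lam)
      ≤ (J:ℝ) + (cplus * n / lam) * ((J:ℝ) ^ (1 - α) / (α - 1)) :=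
        le_trans hsum1 (le_trans hsum2 hsplit)
    _ ≤ (J:ℝ) + (J:ℝ) / (α - 1) := by linarith
    _ = (α / (α - 1)) * (J:ℝ) := by field_simp [hα1.ne']; ring
    _ ≤ (α / (α - 1)) * ((1 + (c₂ / cplus) ^ (1/α)) * u) := by
        exact mul_le_mul_of_nonneg_left hJu hA.le
    _ = (α / (α - 1)) * (1 + (c₂ / cplus) ^ (1/α)) * cplus ^ (1/α) * ((n:ℝ) / lam) ^ (1/α) := by
        rw [hut]; ring

lemma lowerX(α cminus c₁ c₂ : ℝ) (hα : 1 < α) (hcm : 0 < cminus) (hc₁ : 0 < c₁)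
    (hc₂ : 0 < c₂) :
    ∃ C₁ : ℝ, 0 < C₁ ∧ ∀ n : ℕ, 0 < n → ∀ d : Fin n → ℝ,
      (∀ j : Fin n, cminus * n * ((j : ℝ) + 1) ^ (-α) ≤ d j) →
      ∀ lam : ℝ, c₁ * (n : ℝ) ^ (1 - α) ≤ lam → lam ≤ c₂ * n →
      C₁ * ((n : ℝ) / lam) ^ (1 / α) ≤ ∑ j : Fin n, d j / (d j + lam) := by
  have hα0 : (0:ℝ) < α := by linarith
  set K₁ : ℝ := cminus ^ (1/α) * (cminus / (cminus + c₂)) with hK₁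
  set K₂ : ℝ := (1/2) * (min ((c₁/cminus) ^ (1/α)) (1/2)) * cminus ^ (1/α) with hK₂
  have hK₁0 : 0 < K₁ := by rw [hK₁]; positivity
  have hK₂0 : 0 < K₂ := by
    rw [hK₂]
    have : 0 < min ((c₁/cminus) ^ (1/α)) (1/2) := lt_min (by positivity) (by norm_num)
    positivity
  refine ⟨min K₁ K₂, lt_min hK₁0 hK₂0, ?_⟩
  intro n hn d hdlb lam hlamlb hlamub
  have hnR : (0:ℝ) < (n:ℝ) := by exact_mod_cast hn
  have hlam : 0 < lam := lt_of_lt_of_le (by positivity) hlamlb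
  set t : ℝ := ((n:ℝ) / lam) ^ (1/α) with ht
  have ht0 : 0 < t := by positivity
  set s : ℝ := (cminus * n / lam) ^ (1/α) with hs
  have hs0 : 0 < s := by positivity
  have hst : s = cminus ^ (1/α) * t := by
    rw [hs, ht, ← Real.mul_rpow hcm.le (by positivity)]
    congr 1
    field_simp
  have hsα : s ^ α = cminus * n / lam := by
    rw [hs, ← Real.rpow_mul (by positivity), one_div, inv_mul_cancel₀ (ne_of_gt hα0),
      Real.rpow_one]
  have hd0 : ∀ j : Fin n, 0 < d j :=
    fun j => lt_of_lt_of_le (by positivity) (hdlb j)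
  have htermnn : ∀ j : Fin n, 0 ≤ d j / (d j + lam) :=
    fun j => div_nonneg (hd0 j).le (by linarith [hd0 j])
  rcases lt_or_ge s 1 with hs1 | hs1
  -- small s case: use the first term only
  · have hc : (0:ℝ) < cminus ^ (1/α) := by positivity
    have hst1 : cminus ^ (1/α) * t < 1 := by rw [← hst]; exact hs1
    have htle : t < (cminus ^ (1/α))⁻¹ := by
      rw [inv_eq_one_div, lt_div_iff₀ hc]
      nlinarith [hst1]
    set j₀ : Fin n := ⟨0, hn⟩ with hj₀
    have hd₀ : cminus * n ≤ d j₀ := by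
      have := hdlb j₀
      simpa [hj₀, Real.one_rpow] using this
    have hterm₀ : cminus / (cminus + c₂) ≤ d j₀ / (d j₀ + lam) := by
      rw [div_le_div_iff₀ (by positivity) (by linarith [hd0 j₀])]
      nlinarith [hd0 j₀]
    have hsum : d j₀ / (d j₀ + lam) ≤ ∑ j : Fin n, d j / (d j + lam) :=
      Finset.single_le_sum (fun j _ => htermnn j) (Finset.mem_univ j₀)
    have hC : min K₁ K₂ * t ≤ cminus / (cminus + c₂) := by
      calc min K₁ K₂ * t ≤ K₁ * t :=
            mul_le_mul_of_nonneg_right (min_le_left _ _) ht0.le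
        _ ≤ K₁ * (cminus ^ (1/α))⁻¹ := mul_le_mul_of_nonneg_left htle.le hK₁0.le
        _ = cminus / (cminus + c₂) := by
            rw [hK₁]
            have h1 : cminus ^ (1/α) ≠ 0 := by positivity
            field_simp
    linarith
  -- large s case: count terms with eigenvalue ≥ lam
  · set m : ℕ := min n ⌊s⌋₊ with hm
    have hfl1 : 1 ≤ ⌊s⌋₊ := Nat.le_floor (by exact_mod_cast hs1)
    have hfls : (⌊s⌋₊ : ℝ) ≤ s := Nat.floor_le hs0.le
    have hfl2 : s / 2 ≤ (⌊s⌋₊ : ℝ) := by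
      have h1 : s < (⌊s⌋₊ : ℝ) + 1 := Nat.lt_floor_add_one s
      have h2 : (1:ℝ) ≤ (⌊s⌋₊ : ℝ) := by exact_mod_cast hfl1
      linarith
    -- each of the first m terms is at least 1/2
    have hbig : ∀ i : ℕ, ∀ hi : i < n, i < ⌊s⌋₊ → (1:ℝ)/2 ≤ d ⟨i, hi⟩ / (d ⟨i, hi⟩ + lam) := by
      intro i hi him
      have hdi : cminus * n * ((i:ℝ) + 1) ^ (-α) ≤ d ⟨i, hi⟩ := by
        simpa using hdlb ⟨i, hi⟩
      have hi1 : ((i:ℝ) + 1) ≤ s := by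
        have h0 : (i + 1 : ℕ) ≤ ⌊s⌋₊ := him
        have h1 : ((i + 1 : ℕ) : ℝ) ≤ (⌊s⌋₊ : ℝ) := by exact_mod_cast h0
        push_cast at h1
        linarith
      have hi1α : ((i:ℝ) + 1) ^ α ≤ cminus * n / lam := by
        rw [← hsα]
        exact Real.rpow_le_rpow (by positivity) hi1 hα0.le
      have hlamd : lam ≤ d ⟨i, hi⟩ := by
        have hpos : (0:ℝ) < ((i:ℝ) + 1) ^ α := Real.rpow_pos_of_pos (by positivity) _
        have h2 : lam ≤ cminus * n * (((i:ℝ) + 1) ^ α)⁻¹ := by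
          rw [← div_eq_mul_inv, le_div_iff₀ hpos]
          calc lam * ((i:ℝ) + 1) ^ α ≤ lam * (cminus * n / lam) :=
                mul_le_mul_of_nonneg_left hi1α hlam.le
            _ = cminus * n := by field_simp
        calc lam ≤ cminus * n * (((i:ℝ) + 1) ^ α)⁻¹ := h2
          _ = cminus * n * ((i:ℝ) + 1) ^ (-α) := by
              rw [← Real.rpow_neg (by positivity)]
          _ ≤ d ⟨i, hi⟩ := hdi
      have hdp := hd0 ⟨i, hi⟩
      rw [le_div_iff₀ (by linarith)]
      linarith
    -- sum is at least m/2
    have hsumlb : (m:ℝ) * (1/2) ≤ ∑ j : Fin n, d j / (d j + lam) := by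
      have hrange : ∑ j : Fin n, d j / (d j + lam)
          = ∑ i ∈ Finset.range n, if hi : i < n then d ⟨i, hi⟩ / (d ⟨i, hi⟩ + lam) else 0 := by
        rw [Finset.sum_fin_eq_sum_range]
      rw [hrange]
      have hsub : Finset.range m ⊆ Finset.range n :=
        Finset.range_subset_range.mpr (min_le_left _ _)
      calc (m:ℝ) * (1/2) = ∑ _i ∈ Finset.range m, (1/2 : ℝ) := by
            rw [Finset.sum_const, Finset.card_range, nsmul_eq_mul]
        _ ≤ ∑ i ∈ Finset.range m, (if hi : i < n then d ⟨i, hi⟩ / (d ⟨i, hi⟩ + lam) else 0) := by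
            apply Finset.sum_le_sum
            intro i hi
            rw [Finset.mem_range] at hi
            have hin : i < n := lt_of_lt_of_le hi (min_le_left _ _)
            have him : i < ⌊s⌋₊ := lt_of_lt_of_le hi (min_le_right _ _)
            rw [dif_pos hin]
            exact hbig i hin him
        _ ≤ ∑ i ∈ Finset.range n, (if hi : i < n then d ⟨i, hi⟩ / (d ⟨i, hi⟩ + lam) else 0) := by
            apply Finset.sum_le_sum_of_subset_of_nonneg hsub
            intro i hi _
            by_cases h : i < n
            · rw [dif_pos h]; exact htermnn _
            · rw [dif_neg h]
    -- m is at least a constant times s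
    have hns : (c₁/cminus) ^ (1/α) * s ≤ (n:ℝ) := by
      have hsub : s ^ α ≤ (cminus / c₁) * (n:ℝ) ^ α := by
        rw [hsα]
        have h1 : (0:ℝ) < c₁ * (n:ℝ) ^ (1 - α) := by positivity
        have h2 : cminus * n / lam ≤ cminus * n / (c₁ * (n:ℝ) ^ (1 - α)) :=
          div_le_div_of_nonneg_left (by positivity) (by positivity) hlamlb
        have hmul : (n:ℝ) ^ α * (n:ℝ) ^ (1 - α) = (n:ℝ) := by
          rw [← Real.rpow_add hnR]
          norm_num
        have h3 : cminus * (n:ℝ) / (c₁ * (n:ℝ) ^ (1 - α)) = (cminus / c₁) * (n:ℝ) ^ α := by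
          have hkey : (cminus/c₁) * (n:ℝ)^α * (c₁ * (n:ℝ)^(1-α)) = cminus * n := by
            calc (cminus/c₁) * (n:ℝ)^α * (c₁ * (n:ℝ)^(1-α))
                = cminus/c₁*c₁ * ((n:ℝ)^α * (n:ℝ)^(1-α)) := by ring
              _ = cminus * n := by rw [hmul, div_mul_cancel₀ _ (ne_of_gt hc₁)]
          rw [div_eq_iff (ne_of_gt h1)]
          exact hkey.symm
        rw [h3] at h2
        exact h2
      have hs' : s ≤ (cminus / c₁) ^ (1/α) * (n:ℝ) := by
        have h4 : (s ^ α) ^ (1/α) ≤ ((cminus / c₁) * (n:ℝ) ^ α) ^ (1/α) :=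
          Real.rpow_le_rpow (by positivity) hsub (by positivity)
        rw [← Real.rpow_mul hs0.le, mul_one_div, div_self (ne_of_gt hα0),
          Real.rpow_one] at h4
        rw [Real.mul_rpow (by positivity) (by positivity), ← Real.rpow_mul hnR.le,
          mul_one_div, div_self (ne_of_gt hα0), Real.rpow_one] at h4
        exact h4
      have hprod : (c₁/cminus) ^ (1/α) * (cminus/c₁) ^ (1/α) = 1 := by
        rw [← Real.mul_rpow (by positivity) (by positivity)]
        rw [show c₁/cminus * (cminus/c₁) = 1 by field_simp]
        simp
      calc (c₁/cminus) ^ (1/α) * s ≤ (c₁/cminus) ^ (1/α) * ((cminus/c₁) ^ (1/α) * (n:ℝ)) :=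
            mul_le_mul_of_nonneg_left hs' (by positivity)
        _ = (n:ℝ) := by rw [← mul_assoc, hprod, one_mul]
    have hmlb : min ((c₁/cminus) ^ (1/α)) (1/2) * s ≤ (m:ℝ) := by
      have hcast : (m:ℝ) = min (n:ℝ) ((⌊s⌋₊:ℝ)) := by
        rw [hm, Nat.cast_min]
      rw [hcast]
      apply le_min
      · calc min ((c₁/cminus) ^ (1/α)) (1/2) * s ≤ (c₁/cminus) ^ (1/α) * s :=
              mul_le_mul_of_nonneg_right (min_le_left _ _) hs0.le
          _ ≤ (n:ℝ) := hns
      · calc min ((c₁/cminus) ^ (1/α)) (1/2) * s ≤ (1/2) * s :=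
              mul_le_mul_of_nonneg_right (min_le_right _ _) hs0.le
          _ = s / 2 := by ring
          _ ≤ (⌊s⌋₊:ℝ) := hfl2
    calc min K₁ K₂ * t ≤ K₂ * t := mul_le_mul_of_nonneg_right (min_le_right _ _) ht0.le
      _ = (1/2) * (min ((c₁/cminus) ^ (1/α)) (1/2) * s) := by
          rw [hK₂, hst]; ring
      _ ≤ (1/2) * (m:ℝ) := by
          apply mul_le_mul_of_nonneg_left hmlb (by norm_num)
      _ = (m:ℝ) * (1/2) := by ring
      _ ≤ ∑ j : Fin n, d j / (d j + lam) := hsumlb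

/-- for a PSD matrix with eigenvalues `λ_j ≍ n j^{-α}` (`α > 1`), the
effective dimension `d_eff(λ) = tr(M(M+λI)⁻¹) = Σ_j λ_j/(λ_j+λ)` satisfies
`d_eff(λ) ≍ (n/λ)^{1/α}` for all regularization parameters
`c₁ n^{1-α} ≤ λ ≤ c₂ n`, with constants depending only on `α, c₋, c₊, c₁, c₂`. -/
theorem effective_dimension_asymptotics (α cminus cplus c₁ c₂ : ℝ)
    (hα : 1 < α) (hcm : 0 < cminus) (hcp : 0 < cplus) (hc₁ : 0 < c₁) (hc₂ : 0 < c₂) :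
    ∃ C₁ C₂ : ℝ, 0 < C₁ ∧ 0 < C₂ ∧
      ∀ (n : ℕ), 0 < n →
        ∀ (M : Matrix (Fin n) (Fin n) ℝ) (hM : M.PosSemidef),
          (∀ j : Fin n,
            cminus * n * ((j : ℝ) + 1) ^ (-α) ≤ hM.1.eigenvalues j ∧
            hM.1.eigenvalues j ≤ cplus * n * ((j : ℝ) + 1) ^ (-α)) →
          ∀ lam : ℝ, c₁ * (n : ℝ) ^ (1 - α) ≤ lam → lam ≤ c₂ * n →
            (M * (M + lam • (1 : Matrix (Fin n) (Fin n) ℝ))⁻¹).trace =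
              ∑ j : Fin n, hM.1.eigenvalues j / (hM.1.eigenvalues j + lam) ∧
            C₁ * ((n : ℝ) / lam) ^ (1 / α) ≤
              ∑ j : Fin n, hM.1.eigenvalues j / (hM.1.eigenvalues j + lam) ∧
            (∑ j : Fin n, hM.1.eigenvalues j / (hM.1.eigenvalues j + lam)) ≤
              C₂ * ((n : ℝ) / lam) ^ (1 / α) := by
  obtain ⟨C₁, hC₁, hlow⟩ := lowerX α cminus c₁ c₂ hα hcm hc₁ hc₂
  obtain ⟨C₂, hC₂, hup⟩ := upperX α cplus c₂ hα hcp hc₂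
  refine ⟨C₁, C₂, hC₁, hC₂, ?_⟩
  intro n hn M hM hev lam hl1 hl2
  have hnR : (0:ℝ) < (n:ℝ) := by exact_mod_cast hn
  have hlam : 0 < lam := lt_of_lt_of_le (by positivity) hl1
  have hd0 : ∀ j : Fin n, 0 ≤ hM.1.eigenvalues j :=
    fun j => le_trans (by positivity) (hev j).1
  refine ⟨eff_dim_trace M hM lam (fun j => by have := hd0 j; linarith), ?_, ?_⟩
  · exact hlow n hn _ (fun j => (hev j).1) lam hl1 hl2
  · exact hup n hn _ hd0 (fun j => (hev j).2) lam hlam hl2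
end
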